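/- With the filtration setup as above, define the unbounded operator D = Σ_{n≥1} n P_n on H. Then for every a ∈ A_p, the commutator [D,a] extends to a bounded operator on H with norm at most Σ_{|j| ≤ p} |j| · ‖a‖ ≤ p(p+1)‖a‖. -/

import Mathlib

set_option maxHeartbeats 1600000


open scoped ComplexInnerProductSpace

/-- With the filtration setup as in the paper, define the unbounded operator
`D = Σ_{n≥1} n P_n` on `H` (encoded via `HasSum`).  For every `a ∈ A_p`,
the commutator `[D, π a]` extends to a bounded operator `T` on `H`
with `‖T‖ ≤ Σ_{|j|≤p} |j| ⬝ ‖π a‖ = p(p+1)‖π a‖`. -/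
theorem stmt_1
    {A : Type*} [Ring A] [Algebra ℂ A] [StarRing A]
    {H : Type*} [NormedAddCommGroup H] [InnerProductSpace ℂ H] [CompleteSpace H]
    (π : A →⋆ₐ[ℂ] (H →L[ℂ] H)) (Ω : H)
    (F : ℕ → Submodule ℂ A)
    (hmono : Monotone F)
    (hunion : ∀ a : A, ∃ n, a ∈ F n)
    (hstar : ∀ n, ∀ a ∈ F n, star a ∈ F n)
    (hmul : ∀ m n : ℕ, ∀ a ∈ F m, ∀ b ∈ F n, a * b ∈ F (m + n))
    (hzero : F 0 = Submodule.span ℂ {1})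
    (hfd : ∀ n, FiniteDimensional ℂ (F n))
    (vec : A →ₗ[ℂ] H)
    (hvec : ∀ a : A, vec a = π a Ω)
    (hfaithful : Function.Injective vec)
    (hcyclic : Dense (Set.range vec : Set H))
    (Q : ℕ → H →L[ℂ] H)
    (hQmem : ∀ n x, Q n x ∈ (F n).map vec)
    (hQfix : ∀ n, ∀ x ∈ (F n).map vec, Q n x = x)
    (hQsym : ∀ n (x y : H), ⟪Q n x, y⟫ = ⟪x, Q n y⟫)
    (P : ℕ → H →L[ℂ] H)
    (hP0 : P 0 = Q 0)
    (hPsucc : ∀ n : ℕ, P (n + 1) = Q (n + 1) - Q n)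
    (p : ℕ) (a : A) (ha : a ∈ F p) :
    ∃ T : H →L[ℂ] H,
      ‖T‖ ≤ (p : ℝ) * ((p : ℝ) + 1) * ‖π a‖ ∧
      ∀ (x Dx Dax : H),
        HasSum (fun n : ℕ => (n : ℂ) • P n x) Dx →
        HasSum (fun n : ℕ => (n : ℂ) • P n (π a x)) Dax →
        T x = Dax - π a Dx := by
  classical
  set K : ℝ := (p : ℝ) * ((p : ℝ) + 1) * ‖π a‖ with hKdef
  -- orthogonal projection contraction principle
  have hproj_contract : ∀ R : H →L[ℂ] H, (∀ u v : H, ⟪R u, v⟫ = ⟪u, R v⟫) →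
      (∀ u, R (R u) = R u) → ∀ u, ‖R u‖ ≤ ‖u‖ := by
    intro R hsym hid u
    have h2 : (‖R u‖ : ℝ) ^ 2 = RCLike.re ⟪R u, R u⟫ := (inner_self_eq_norm_sq (R u)).symm
    have h3 : ⟪R u, R u⟫ = ⟪u, R u⟫ := by rw [hsym u (R u), hid]
    have h4 : RCLike.re ⟪u, R u⟫ ≤ ‖u‖ * ‖R u‖ := re_inner_le_norm u (R u)
    have h5 : ‖R u‖ ^ 2 ≤ ‖u‖ * ‖R u‖ := by rw [h2, h3]; exact h4
    nlinarith [norm_nonneg (R u), norm_nonneg u]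
  -- Q facts
  have hQidem : ∀ n x, Q n (Q n x) = Q n x := fun n x => hQfix n _ (hQmem n x)
  have hQcontract : ∀ n (x : H), ‖Q n x‖ ≤ ‖x‖ :=
    fun n => hproj_contract (Q n) (hQsym n) (hQidem n)
  have hQfix' : ∀ n m : ℕ, n ≤ m → ∀ x ∈ (F n).map vec, Q m x = x := by
    intro n m h x hx
    exact hQfix m x (Submodule.map_mono (hmono h) hx)
  have hQadj : ∀ n, ContinuousLinearMap.adjoint (Q n) = Q n := by
    intro n
    exact ((ContinuousLinearMap.eq_adjoint_iff (Q n) (Q n)).2 (hQsym n)).symm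
  have hQQ : ∀ i j : ℕ, Q i ∘L Q j = Q (min i j) := by
    have hright : ∀ i j : ℕ, j ≤ i → Q i ∘L Q j = Q j := by
      intro i j h
      ext x
      exact hQfix' j i h _ (hQmem j x)
    intro i j
    rcases le_total j i with h | h
    · rw [hright i j h, min_eq_right h]
    · have h1 := hright j i h
      have h2 := congrArg ContinuousLinearMap.adjoint h1
      rw [ContinuousLinearMap.adjoint_comp, hQadj, hQadj] at h2
      rw [h2, min_eq_left h]
  -- P facts
  have hPsymm : ∀ n (x y : H), ⟪P n x, y⟫ = ⟪x, P n y⟫ := by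
    intro n x y
    cases n with
    | zero => rw [hP0]; exact hQsym 0 x y
    | succ m =>
      rw [hPsucc m]
      simp only [ContinuousLinearMap.sub_apply, inner_sub_left, inner_sub_right,
        hQsym (m+1), hQsym m]
  have hQQx : ∀ (i j : ℕ) (x : H), Q i (Q j x) = Q (min i j) x := by
    intro i j x
    exact congrArg (fun T : H →L[ℂ] H => T x) (hQQ i j)
  have hPP : ∀ m n : ℕ, P m ∘L P n = if m = n then P n else 0 := by
    intro m n
    ext x
    rcases m with _ | k <;> rcases n with _ | l
    · simp [hP0, hQQx]
    · rw [if_neg (show ¬(0 = l + 1) by omega)]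
      simp only [hP0, hPsucc, ContinuousLinearMap.comp_apply, ContinuousLinearMap.sub_apply,
        map_sub, ContinuousLinearMap.zero_apply]
      rw [hQQx, hQQx, min_eq_left (show (0:ℕ) ≤ l + 1 from Nat.zero_le _),
        min_eq_left (show (0:ℕ) ≤ l from Nat.zero_le _)]
      abel
    · rw [if_neg (show ¬(k + 1 = 0) by omega)]
      simp only [hP0, hPsucc, ContinuousLinearMap.comp_apply, ContinuousLinearMap.sub_apply,
        ContinuousLinearMap.zero_apply]
      rw [hQQx, hQQx, min_eq_right (show (0:ℕ) ≤ k + 1 from Nat.zero_le _),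
        min_eq_right (show (0:ℕ) ≤ k from Nat.zero_le _)]
      abel
    · simp only [hPsucc, ContinuousLinearMap.comp_apply, ContinuousLinearMap.sub_apply,
        map_sub, ContinuousLinearMap.zero_apply]
      rw [hQQx, hQQx, hQQx, hQQx]
      rcases lt_trichotomy k l with h | h | h
      · rw [if_neg (show ¬(k + 1 = l + 1) by omega)]
        rw [min_eq_left (show k + 1 ≤ l + 1 by omega), min_eq_left (show k + 1 ≤ l by omega),
          min_eq_left (show k ≤ l + 1 by omega), min_eq_left (show k ≤ l by omega)]
        simp only [ContinuousLinearMap.zero_apply]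
        abel
      · subst h
        rw [if_pos rfl]
        rw [min_self (k+1), min_eq_right (Nat.le_succ k), min_eq_left (Nat.le_succ k),
          min_self k]
        simp only [ContinuousLinearMap.sub_apply]
        abel
      · rw [if_neg (show ¬(k + 1 = l + 1) by omega)]
        rw [min_eq_right (show l + 1 ≤ k + 1 by omega), min_eq_right (show l ≤ k + 1 by omega),
          min_eq_right (show l + 1 ≤ k by omega), min_eq_right (show l ≤ k by omega)]
        simp only [ContinuousLinearMap.zero_apply]
        abel
  have hPidem : ∀ n x, P n (P n x) = P n x := by
    intro n x
    have := congrArg (fun T : H →L[ℂ] H => T x) (hPP n n)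
    simpa using this
  have hPcontract : ∀ n (x : H), ‖P n x‖ ≤ ‖x‖ :=
    fun n => hproj_contract (P n) (hPsymm n) (hPidem n)
  have hPzero : ∀ m n : ℕ, m ≠ n → ∀ x, P m (P n x) = 0 := by
    intro m n h x
    have := congrArg (fun T : H →L[ℂ] H => T x) (hPP m n)
    simpa [h] using this
  have hPmem : ∀ n x, P n x ∈ (F n).map vec := by
    intro n x
    cases n with
    | zero => rw [hP0]; exact hQmem 0 x
    | succ m =>
      rw [hPsucc m]
      exact sub_mem (hQmem (m+1) x)
        (Submodule.map_mono (hmono (Nat.le_succ m)) (hQmem m x))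
  have hQsum : ∀ n : ℕ, ∑ i ∈ Finset.range (n + 1), P i = Q n := by
    intro n
    induction n with
    | zero => simpa using hP0
    | succ m ih => rw [Finset.sum_range_succ, ih, hPsucc m]; abel
  have hQsumx : ∀ (n : ℕ) (z : H), ∑ i ∈ Finset.range (n + 1), P i z = Q n z := by
    intro n z
    rw [← hQsum n]
    simp [ContinuousLinearMap.sum_apply]
  -- orthogonal family norm identities
  have horth : ∀ (s : Finset ℕ) (v : ℕ → H),
      (∀ i ∈ s, ∀ j ∈ s, i ≠ j → ⟪v i, v j⟫ = (0 : ℂ)) →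
      ‖∑ i ∈ s, v i‖ ^ 2 = ∑ i ∈ s, ‖v i‖ ^ 2 := by
    intro s v hv
    have h1 : ⟪∑ i ∈ s, v i, ∑ j ∈ s, v j⟫ = ∑ i ∈ s, ⟪v i, v i⟫ := by
      rw [sum_inner]
      refine Finset.sum_congr rfl fun i hi => ?_
      rw [inner_sum]
      exact Finset.sum_eq_single_of_mem i hi fun j hj hne => hv i hi j hj hne.symm
    calc ‖∑ i ∈ s, v i‖ ^ 2 = RCLike.re ⟪∑ i ∈ s, v i, ∑ j ∈ s, v j⟫ :=
          (inner_self_eq_norm_sq _).symm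
      _ = ∑ i ∈ s, RCLike.re ⟪v i, v i⟫ := by rw [h1, map_sum]
      _ = ∑ i ∈ s, ‖v i‖ ^ 2 := Finset.sum_congr rfl fun i _ => inner_self_eq_norm_sq (v i)
  have hPorthog : ∀ (m n : ℕ) (u v : H), m ≠ n → ⟪P m u, P n v⟫ = (0 : ℂ) := by
    intro m n u v h
    rw [hPsymm m]
    rw [hPzero m n h v, inner_zero_right]
  have hBessel : ∀ (s : Finset ℕ) (x : H), ∑ i ∈ s, ‖P i x‖ ^ 2 ≤ ‖x‖ ^ 2 := by
    intro s x
    set R : H →L[ℂ] H := ∑ i ∈ s, P i with hR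
    have hRx : ∀ y : H, R y = ∑ i ∈ s, P i y := by
      intro y; rw [hR]; simp [ContinuousLinearMap.sum_apply]
    have hRsym : ∀ u v : H, ⟪R u, v⟫ = ⟪u, R v⟫ := by
      intro u v
      rw [hRx, hRx, sum_inner, inner_sum]
      exact Finset.sum_congr rfl fun i _ => hPsymm i u v
    have hRidem : ∀ u : H, R (R u) = R u := by
      intro u
      rw [hRx u, map_sum]
      refine Finset.sum_congr rfl fun i hi => ?_
      rw [hRx]
      rw [Finset.sum_eq_single_of_mem i hi fun j hj hne => hPzero j i hne u]
      exact hPidem i u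
    have hRc := hproj_contract R hRsym hRidem x
    have h1 : ∑ i ∈ s, ‖P i x‖ ^ 2 = ‖R x‖ ^ 2 := by
      rw [hRx]
      exact (horth s (fun i => P i x) (fun i _ j _ h => hPorthog i j x x h)).symm
    rw [h1]
    exact pow_le_pow_left₀ (norm_nonneg _) hRc 2
  -- membership under π b for b ∈ F p
  have hApi : ∀ b ∈ F p, ∀ (n : ℕ) (x : H), x ∈ (F n).map vec → π b x ∈ (F (p + n)).map vec := by
    intro b hb n x hx
    obtain ⟨c, hc, rfl⟩ := hx
    refine ⟨b * c, hmul p n b hb c hc, ?_⟩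
    rw [hvec (b * c), hvec c, map_mul]
    rfl
  -- key norm estimate for the "upper triangular" part
  have hgauss : ∀ q : ℕ, ∑ j ∈ Finset.Icc 1 q, (j : ℝ) = (q : ℝ) * ((q : ℝ) + 1) / 2 := by
    intro q
    induction q with
    | zero => simp
    | succ r ih =>
      rw [Finset.sum_Icc_succ_top (show 1 ≤ r + 1 by omega), ih]
      push_cast
      ring
  have hkey : ∀ b ∈ F p, ∀ (N : ℕ) (x : H),
      ‖(∑ k ∈ Finset.range N, ((1 - Q k) ∘L (π b ∘L Q k))) x‖ ≤
        ((p : ℝ) * ((p : ℝ) + 1) / 2) * ‖π b‖ * ‖x‖ := by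
    intro b hb N x
    have hfixb : ∀ (k i : ℕ) (z : H), i + p ≤ k → Q k (π b (P i z)) = π b (P i z) := by
      intro k i z hk
      exact hQfix' (p + i) k (by omega) _ (hApi b hb i (P i z) (hPmem i z))
    have hstep1 : ∀ k i : ℕ,
        ((1 - Q k) ∘L (π b ∘L P i)) = ∑ m ∈ Finset.Ioc k (i + p), (P m ∘L (π b ∘L P i)) := by
      intro k i
      ext z
      simp only [ContinuousLinearMap.sum_apply, ContinuousLinearMap.comp_apply,
        ContinuousLinearMap.sub_apply, ContinuousLinearMap.one_apply]
      rcases le_or_gt k (i + p) with h | h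
      · have hsum2 : ∑ m ∈ Finset.Ioc k (i + p), P m (π b (P i z))
            = Q (i + p) (π b (P i z)) - Q k (π b (P i z)) := by
          rw [← Finset.Ico_add_one_add_one_eq_Ioc, Finset.sum_Ico_eq_sub _ (Nat.add_le_add_right h 1),
            hQsumx, hQsumx]
        rw [hsum2, hfixb (i + p) i z le_rfl]
      · rw [Finset.Ioc_eq_empty (show ¬k < i + p by omega), Finset.sum_empty,
          hfixb k i z (by omega), sub_self]
    have hstep2 : ∀ k i : ℕ, i ≤ k →
        ((1 - Q k) ∘L (π b ∘L P i))
          = ∑ j ∈ Finset.Ioc (k - i) p, (P (i + j) ∘L (π b ∘L P i)) := by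
      intro k i hik
      rw [hstep1 k i]
      have h1 : Finset.Ioc k (i + p) = (Finset.Ioc (k - i) p).map (addLeftEmbedding i) := by
        rw [Finset.map_add_left_Ioc]
        congr 1
        omega
      rw [h1, Finset.sum_map]
      refine Finset.sum_congr rfl fun j _ => ?_
      rw [addLeftEmbedding_apply]
    have hstep3 : ∀ M i : ℕ, i ≤ M →
        ((1 - Q M) ∘L (π b ∘L P i))
          = ∑ j ∈ Finset.Icc 1 p,
              (if M < i + j then (1 : ℂ) else 0) • (P (i + j) ∘L (π b ∘L P i)) := by
      intro M i hiM
      rw [hstep2 M i hiM]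
      have h1 : Finset.Ioc (M - i) p
          = (Finset.Icc 1 p).filter (fun j => M < i + j) := by
        ext j
        simp only [Finset.mem_Ioc, Finset.mem_filter, Finset.mem_Icc]
        omega
      rw [h1, Finset.sum_filter]
      refine Finset.sum_congr rfl fun j _ => ?_
      split_ifs with h
      · rw [one_smul]
      · rw [zero_smul]
    have hid : ∀ N' : ℕ,
        (∑ k ∈ Finset.range N', ((1 - Q k) ∘L (π b ∘L Q k)))
          = ∑ j ∈ Finset.Icc 1 p, ∑ i ∈ Finset.range N',
              ((min N' (i + j) - i : ℕ) : ℂ) • (P (i + j) ∘L (π b ∘L P i)) := by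
      intro N'
      induction N' with
      | zero => simp
      | succ M ih =>
        rw [Finset.sum_range_succ, ih]
        have hQN : ((1 - Q M) ∘L (π b ∘L Q M))
            = ∑ i ∈ Finset.range (M + 1), ((1 - Q M) ∘L (π b ∘L P i)) := by
          ext z
          simp only [ContinuousLinearMap.sum_apply, ContinuousLinearMap.comp_apply,
            ContinuousLinearMap.sub_apply, ContinuousLinearMap.one_apply]
          rw [← hQsumx M z]
          simp only [map_sum, ← Finset.sum_sub_distrib]
        rw [hQN]
        have h2 : ∑ i ∈ Finset.range (M + 1), ((1 - Q M) ∘L (π b ∘L P i))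
            = ∑ j ∈ Finset.Icc 1 p, ∑ i ∈ Finset.range (M + 1),
                (if M < i + j then (1 : ℂ) else 0) • (P (i + j) ∘L (π b ∘L P i)) := by
          rw [← Finset.sum_comm]
          exact Finset.sum_congr rfl fun i hi =>
            hstep3 M i (Nat.lt_succ_iff.mp (Finset.mem_range.mp hi))
        rw [h2, ← Finset.sum_add_distrib]
        refine Finset.sum_congr rfl fun j hj => ?_
        have hj1 : 1 ≤ j := (Finset.mem_Icc.mp hj).1
        have hco : ∀ i ∈ Finset.range (M + 1),
            ((min (M + 1) (i + j) - i : ℕ) : ℂ) • (P (i + j) ∘L (π b ∘L P i))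
              = ((min M (i + j) - i : ℕ) : ℂ) • (P (i + j) ∘L (π b ∘L P i))
                + (if M < i + j then (1 : ℂ) else 0) • (P (i + j) ∘L (π b ∘L P i)) := by
          intro i hi
          have hiM : i ≤ M := Nat.lt_succ_iff.mp (Finset.mem_range.mp hi)
          rw [← add_smul]
          congr 1
          split_ifs with h
          · have e1 : min (M + 1) (i + j) - i = (min M (i + j) - i) + 1 := by omega
            rw [e1]
            push_cast
            ring
          · have e1 : min (M + 1) (i + j) = min M (i + j) := by omega
            rw [e1, add_zero]
        rw [Finset.sum_congr rfl hco, Finset.sum_add_distrib]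
        congr 1
        rw [Finset.sum_range_succ]
        have e2 : ((min M (M + j) - M : ℕ) : ℂ) = 0 := by
          have e3 : min M (M + j) - M = 0 := by omega
          rw [e3]
          norm_cast
        rw [e2, zero_smul, add_zero]
    rw [hid N]
    have happly : (∑ j ∈ Finset.Icc 1 p, ∑ i ∈ Finset.range N,
        ((min N (i + j) - i : ℕ) : ℂ) • (P (i + j) ∘L (π b ∘L P i))) x
        = ∑ j ∈ Finset.Icc 1 p, ∑ i ∈ Finset.range N,
            ((min N (i + j) - i : ℕ) : ℂ) • P (i + j) (π b (P i x)) := by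
      simp [ContinuousLinearMap.sum_apply]
    rw [happly]
    have hWj : ∀ j ∈ Finset.Icc 1 p,
        ‖∑ i ∈ Finset.range N, ((min N (i + j) - i : ℕ) : ℂ) • P (i + j) (π b (P i x))‖
          ≤ (j : ℝ) * ‖π b‖ * ‖x‖ := by
      intro j hj
      have hsq : ‖∑ i ∈ Finset.range N,
            ((min N (i + j) - i : ℕ) : ℂ) • P (i + j) (π b (P i x))‖ ^ 2
          = ∑ i ∈ Finset.range N,
              ‖((min N (i + j) - i : ℕ) : ℂ) • P (i + j) (π b (P i x))‖ ^ 2 := by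
        refine horth _ _ fun i _ i' _ hne => ?_
        rw [inner_smul_left, inner_smul_right,
          hPorthog (i + j) (i' + j) _ _ (by omega), mul_zero, mul_zero]
      have hterm : ∀ i ∈ Finset.range N,
          ‖((min N (i + j) - i : ℕ) : ℂ) • P (i + j) (π b (P i x))‖ ^ 2
            ≤ (j : ℝ) ^ 2 * ‖π b‖ ^ 2 * ‖P i x‖ ^ 2 := by
        intro i _
        rw [norm_smul]
        have h1 : ‖((min N (i + j) - i : ℕ) : ℂ)‖ ≤ (j : ℝ) := by
          rw [Complex.norm_natCast]
          exact_mod_cast (show min N (i + j) - i ≤ j by omega)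
        have h2 : ‖P (i + j) (π b (P i x))‖ ≤ ‖π b‖ * ‖P i x‖ :=
          le_trans (hPcontract (i + j) _) ((π b).le_opNorm _)
        have h3 : (0:ℝ) ≤ ‖((min N (i + j) - i : ℕ) : ℂ)‖ := norm_nonneg _
        have h4 : (0:ℝ) ≤ ‖P (i + j) (π b (P i x))‖ := norm_nonneg _
        have h5 : (0:ℝ) ≤ ‖π b‖ * ‖P i x‖ := by positivity
        have h6 : ‖((min N (i + j) - i : ℕ) : ℂ)‖ * ‖P (i + j) (π b (P i x))‖
            ≤ (j : ℝ) * (‖π b‖ * ‖P i x‖) := mul_le_mul h1 h2 h4 (Nat.cast_nonneg j)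
        calc (‖((min N (i + j) - i : ℕ) : ℂ)‖ * ‖P (i + j) (π b (P i x))‖) ^ 2
            ≤ ((j : ℝ) * (‖π b‖ * ‖P i x‖)) ^ 2 :=
              pow_le_pow_left₀ (mul_nonneg h3 h4) h6 2
          _ = (j : ℝ) ^ 2 * ‖π b‖ ^ 2 * ‖P i x‖ ^ 2 := by ring
      have hsum2 : ∑ i ∈ Finset.range N,
          ‖((min N (i + j) - i : ℕ) : ℂ) • P (i + j) (π b (P i x))‖ ^ 2
            ≤ (j : ℝ) ^ 2 * ‖π b‖ ^ 2 * ‖x‖ ^ 2 := by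
        calc ∑ i ∈ Finset.range N,
            ‖((min N (i + j) - i : ℕ) : ℂ) • P (i + j) (π b (P i x))‖ ^ 2
            ≤ ∑ i ∈ Finset.range N, (j : ℝ) ^ 2 * ‖π b‖ ^ 2 * ‖P i x‖ ^ 2 :=
              Finset.sum_le_sum hterm
          _ = (j : ℝ) ^ 2 * ‖π b‖ ^ 2 * ∑ i ∈ Finset.range N, ‖P i x‖ ^ 2 := by
              rw [Finset.mul_sum]
          _ ≤ (j : ℝ) ^ 2 * ‖π b‖ ^ 2 * ‖x‖ ^ 2 := by
              have hb2 := hBessel (Finset.range N) x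
              have hnn : (0:ℝ) ≤ (j : ℝ) ^ 2 * ‖π b‖ ^ 2 := by positivity
              exact mul_le_mul_of_nonneg_left hb2 hnn
      have hfin : ‖∑ i ∈ Finset.range N,
            ((min N (i + j) - i : ℕ) : ℂ) • P (i + j) (π b (P i x))‖ ^ 2
          ≤ ((j : ℝ) * ‖π b‖ * ‖x‖) ^ 2 := by
        rw [hsq]
        calc ∑ i ∈ Finset.range N,
            ‖((min N (i + j) - i : ℕ) : ℂ) • P (i + j) (π b (P i x))‖ ^ 2
            ≤ (j : ℝ) ^ 2 * ‖π b‖ ^ 2 * ‖x‖ ^ 2 := hsum2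
          _ = ((j : ℝ) * ‖π b‖ * ‖x‖) ^ 2 := by ring
      have hnn : (0:ℝ) ≤ (j : ℝ) * ‖π b‖ * ‖x‖ := by positivity
      nlinarith [norm_nonneg (∑ i ∈ Finset.range N,
        ((min N (i + j) - i : ℕ) : ℂ) • P (i + j) (π b (P i x)))]
    calc ‖∑ j ∈ Finset.Icc 1 p, ∑ i ∈ Finset.range N,
          ((min N (i + j) - i : ℕ) : ℂ) • P (i + j) (π b (P i x))‖
        ≤ ∑ j ∈ Finset.Icc 1 p, ‖∑ i ∈ Finset.range N,
            ((min N (i + j) - i : ℕ) : ℂ) • P (i + j) (π b (P i x))‖ := norm_sum_le _ _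
      _ ≤ ∑ j ∈ Finset.Icc 1 p, (j : ℝ) * ‖π b‖ * ‖x‖ := Finset.sum_le_sum hWj
      _ = (∑ j ∈ Finset.Icc 1 p, (j : ℝ)) * (‖π b‖ * ‖x‖) := by
          rw [Finset.sum_mul]
          exact Finset.sum_congr rfl fun j _ => by ring
      _ = ((p : ℝ) * ((p : ℝ) + 1) / 2) * ‖π b‖ * ‖x‖ := by
          rw [hgauss p]
          ring
  -- the commutator approximants
  set C : ℕ → H →L[ℂ] H := fun N => ∑ k ∈ Finset.range N, (π a ∘L Q k - Q k ∘L π a) with hCdef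
  have hCbound : ∀ (N : ℕ) (x : H), ‖C N x‖ ≤ K * ‖x‖ := by
    intro N x
    set U : H →L[ℂ] H := ∑ k ∈ Finset.range N, ((1 - Q k) ∘L (π a ∘L Q k)) with hU
    set L : H →L[ℂ] H := ∑ k ∈ Finset.range N, (Q k ∘L (π a ∘L (1 - Q k))) with hL
    have hCUL : C N x = U x - L x := by
      simp only [hCdef, hU, hL, ContinuousLinearMap.sum_apply, ← Finset.sum_sub_distrib]
      refine Finset.sum_congr rfl fun k _ => ?_
      simp only [ContinuousLinearMap.sub_apply, ContinuousLinearMap.comp_apply,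
        ContinuousLinearMap.one_apply, map_sub]
      abel
    have hUx : ‖U x‖ ≤ ((p : ℝ) * ((p : ℝ) + 1) / 2) * ‖π a‖ * ‖x‖ := hkey a ha N x
    have hadj1 : ∀ k : ℕ, ContinuousLinearMap.adjoint (1 - Q k) = 1 - Q k := by
      intro k
      rw [map_sub, hQadj]
      congr 1
      rw [← ContinuousLinearMap.star_eq_adjoint, star_one]
    have hadj2 : ContinuousLinearMap.adjoint (π a) = π (star a) := by
      rw [← ContinuousLinearMap.star_eq_adjoint, ← map_star]
    have hLadj : ContinuousLinearMap.adjoint L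
        = ∑ k ∈ Finset.range N, ((1 - Q k) ∘L (π (star a) ∘L Q k)) := by
      rw [hL, map_sum]
      refine Finset.sum_congr rfl fun k _ => ?_
      rw [ContinuousLinearMap.adjoint_comp, ContinuousLinearMap.adjoint_comp, hQadj,
        hadj1, hadj2, ContinuousLinearMap.comp_assoc]
    have hstarnorm : ‖π (star a)‖ = ‖π a‖ := by
      rw [map_star]
      exact norm_star (π a)
    have hLbound : ‖L x‖ ≤ ((p : ℝ) * ((p : ℝ) + 1) / 2) * ‖π a‖ * ‖x‖ := by
      have h1 : ‖ContinuousLinearMap.adjoint L‖ ≤ ((p : ℝ) * ((p : ℝ) + 1) / 2) * ‖π (star a)‖ := by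
        refine ContinuousLinearMap.opNorm_le_bound _ (by positivity) fun y => ?_
        rw [hLadj]
        exact hkey (star a) (hstar p a ha) N y
      have h2 : ‖L‖ = ‖ContinuousLinearMap.adjoint L‖ :=
        (ContinuousLinearMap.adjoint.norm_map L).symm
      calc ‖L x‖ ≤ ‖L‖ * ‖x‖ := L.le_opNorm x
        _ ≤ (((p : ℝ) * ((p : ℝ) + 1) / 2) * ‖π (star a)‖) * ‖x‖ := by
            rw [h2]
            exact mul_le_mul_of_nonneg_right h1 (norm_nonneg x)
        _ = ((p : ℝ) * ((p : ℝ) + 1) / 2) * ‖π a‖ * ‖x‖ := by rw [hstarnorm]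
    rw [hCUL]
    have hsum : ((p : ℝ) * ((p : ℝ) + 1) / 2) * ‖π a‖ * ‖x‖
        + ((p : ℝ) * ((p : ℝ) + 1) / 2) * ‖π a‖ * ‖x‖ = K * ‖x‖ := by
      rw [hKdef]; ring
    calc ‖U x - L x‖ ≤ ‖U x‖ + ‖L x‖ := norm_sub_le _ _
      _ ≤ _ := add_le_add hUx hLbound
      _ = K * ‖x‖ := hsum
  -- eventual constancy on the dense range
  have hconst : ∀ (b₀ : A) (M₀ : ℕ), b₀ ∈ F M₀ → ∀ N, M₀ + p ≤ N →
      C N (vec b₀) = C (M₀ + p) (vec b₀) := by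
    intro b₀ M₀ hb₀ N hN
    have happ : ∀ M : ℕ, C M (vec b₀)
        = ∑ k ∈ Finset.range M, (π a (Q k (vec b₀)) - Q k (π a (vec b₀))) := by
      intro M
      simp [hCdef, ContinuousLinearMap.sum_apply]
    rw [happ, happ]
    refine (Finset.sum_subset (Finset.range_subset_range.2 hN) ?_).symm
    intro k hk hk'
    have hkge : M₀ + p ≤ k := by
      simp only [Finset.mem_range, not_lt] at hk'
      exact hk'
    have h1 : Q k (vec b₀) = vec b₀ := hQfix' M₀ k (by omega) _ ⟨b₀, hb₀, rfl⟩
    have h2 : Q k (π a (vec b₀)) = π a (vec b₀) :=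
      hQfix' (p + M₀) k (by omega) _ (hApi a ha M₀ (vec b₀) ⟨b₀, hb₀, rfl⟩)
    rw [h1, h2, sub_self]
  have hKnonneg : (0 : ℝ) ≤ K := by positivity
  have hcauchy : ∀ x : H, CauchySeq fun N => C N x := by
    intro x
    rw [Metric.cauchySeq_iff']
    intro ε hε
    obtain ⟨b₀, hb₀⟩ := Metric.denseRange_iff.mp hcyclic x (ε / (2 * K + 2)) (by positivity)
    obtain ⟨M₀, hM₀⟩ := hunion b₀
    refine ⟨M₀ + p, fun n hn => ?_⟩
    have heq : C n (vec b₀) = C (M₀ + p) (vec b₀) := hconst b₀ M₀ hM₀ n hn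
    have hsplit : C n x - C (M₀ + p) x
        = C n (x - vec b₀) - C (M₀ + p) (x - vec b₀) := by
      rw [map_sub, map_sub, heq]; abel
    rw [dist_eq_norm, hsplit]
    have h1 := hCbound n (x - vec b₀)
    have h2 := hCbound (M₀ + p) (x - vec b₀)
    have h3 : ‖x - vec b₀‖ < ε / (2 * K + 2) := by
      rw [← dist_eq_norm]; exact hb₀
    have h4 : ‖x - vec b₀‖ * (2 * K + 2) < ε := by
      rw [← lt_div_iff₀ (by positivity)]; exact h3
    have h5 : (0:ℝ) ≤ ‖x - vec b₀‖ := norm_nonneg _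
    calc ‖C n (x - vec b₀) - C (M₀ + p) (x - vec b₀)‖
        ≤ ‖C n (x - vec b₀)‖ + ‖C (M₀ + p) (x - vec b₀)‖ := norm_sub_le _ _
      _ ≤ K * ‖x - vec b₀‖ + K * ‖x - vec b₀‖ := add_le_add h1 h2
      _ < ε := by nlinarith
  -- the limit operator
  have hlim : ∀ x : H, ∃ y : H, Filter.Tendsto (fun N => C N x) Filter.atTop (nhds y) :=
    fun x => cauchySeq_tendsto_of_complete (hcauchy x)
  set Tf : H → H := fun x => Filter.limUnder Filter.atTop (fun N => C N x) with hTfdef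
  have htend : ∀ x : H, Filter.Tendsto (fun N => C N x) Filter.atTop (nhds (Tf x)) := by
    intro x
    obtain ⟨y, hy⟩ := hlim x
    have hxy : Tf x = y := by rw [hTfdef]; exact hy.limUnder_eq
    rw [hxy]; exact hy
  have hTfadd : ∀ x y : H, Tf (x + y) = Tf x + Tf y := by
    intro x y
    refine tendsto_nhds_unique (htend (x + y)) ?_
    have : (fun N => C N (x + y)) = fun N => C N x + C N y := by
      funext N; rw [map_add]
    rw [this]
    exact (htend x).add (htend y)
  have hTfsmul : ∀ (c : ℂ) (x : H), Tf (c • x) = c • Tf x := by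
    intro c x
    refine tendsto_nhds_unique (htend (c • x)) ?_
    have : (fun N => C N (c • x)) = fun N => c • C N x := by
      funext N; rw [map_smul]
    rw [this]
    exact (htend x).const_smul c
  have hTfbound : ∀ x : H, ‖Tf x‖ ≤ K * ‖x‖ := by
    intro x
    refine le_of_tendsto (htend x).norm ?_
    exact Filter.Eventually.of_forall fun N => hCbound N x
  set Tl : H →ₗ[ℂ] H :=
    { toFun := Tf
      map_add' := hTfadd
      map_smul' := hTfsmul } with hTldef
  refine ⟨Tl.mkContinuous K hTfbound, Tl.mkContinuous_norm_le hKnonneg hTfbound, ?_⟩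
  intro x Dx Dax h1 h2
  -- identify T x with the limit of the commutator approximants
  have hTx : (Tl.mkContinuous K hTfbound) x = Tf x := rfl
  rw [hTx]
  -- D' N y  :=  ∑_{k<N} (y - Q k y)
  have hCid : ∀ (N : ℕ) (x : H),
      C N x = (∑ k ∈ Finset.range N, (π a x - Q k (π a x))) -
        π a (∑ k ∈ Finset.range N, (x - Q k x)) := by
    intro N x
    simp only [hCdef, ContinuousLinearMap.sum_apply, ContinuousLinearMap.sub_apply,
      ContinuousLinearMap.comp_apply, map_sum, map_sub, ← Finset.sum_sub_distrib]
    exact Finset.sum_congr rfl fun k _ => by abel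
  have hclaimC : ∀ (y Dy : H), HasSum (fun n : ℕ => (n : ℂ) • P n y) Dy →
      Filter.Tendsto (fun N => ∑ k ∈ Finset.range N, (y - Q k y)) Filter.atTop (nhds Dy) := by
    have hQlim : ∀ y : H, Filter.Tendsto (fun M => Q M y) Filter.atTop (nhds y) := by
      intro y
      rw [Metric.tendsto_atTop]
      intro ε hε
      obtain ⟨b₀, hb₀⟩ := Metric.denseRange_iff.mp hcyclic y (ε / 3) (by positivity)
      obtain ⟨M₀, hM₀⟩ := hunion b₀
      refine ⟨M₀, fun n hn => ?_⟩
      have h1 : Q n (vec b₀) = vec b₀ := hQfix' M₀ n hn _ ⟨b₀, hM₀, rfl⟩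
      have h2 : ‖y - vec b₀‖ < ε / 3 := by rw [← dist_eq_norm]; exact hb₀
      have h3 : Q n y - y = Q n (y - vec b₀) - (y - vec b₀) := by
        rw [map_sub, h1]; abel
      rw [dist_eq_norm, h3]
      calc ‖Q n (y - vec b₀) - (y - vec b₀)‖
          ≤ ‖Q n (y - vec b₀)‖ + ‖y - vec b₀‖ := norm_sub_le _ _
        _ ≤ ‖y - vec b₀‖ + ‖y - vec b₀‖ := add_le_add (hQcontract n _) le_rfl
        _ < ε := by linarith
    intro y Dy hsum
    have hS : Filter.Tendsto (fun N : ℕ => ∑ n ∈ Finset.range (N + 1), (n : ℂ) • P n y)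
        Filter.atTop (nhds Dy) := by
      have h0 := hsum.tendsto_sum_nat
      exact h0.comp (Filter.tendsto_add_atTop_nat 1)
    -- partial sums of the D' series
    have hD'id : ∀ N : ℕ, ∑ k ∈ Finset.range N, (y - Q k y)
        = (∑ n ∈ Finset.range (N + 1), (n : ℂ) • P n y) + (N : ℂ) • (y - Q N y) := by
      intro N
      induction N with
      | zero => simp
      | succ M ih =>
        rw [Finset.sum_range_succ, ih, Finset.sum_range_succ
          (fun n => (n : ℂ) • P n y) (M + 1)]
        have hps : P (M + 1) y = Q (M + 1) y - Q M y := by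
          rw [hPsucc]; rfl
        rw [hps]
        push_cast
        module
    -- difference of partial sums over a window
    have hSdiff : ∀ N M : ℕ, N ≤ M →
        (∑ n ∈ Finset.range (M + 1), (n : ℂ) • P n y)
          - (∑ n ∈ Finset.range (N + 1), (n : ℂ) • P n y)
          = ∑ n ∈ Finset.Ioc N M, (n : ℂ) • P n y := by
      intro N M h
      rw [← Finset.Ico_add_one_add_one_eq_Ioc, Finset.sum_Ico_eq_sub _ (Nat.add_le_add_right h 1)]
    have hQdiff : ∀ N M : ℕ, N ≤ M →
        Q M y - Q N y = ∑ n ∈ Finset.Ioc N M, P n y := by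
      intro N M h
      rw [← hQsumx M y, ← hQsumx N y, ← Finset.Ico_add_one_add_one_eq_Ioc,
        Finset.sum_Ico_eq_sub _ (Nat.add_le_add_right h 1)]
    -- key inequality : N * ‖y - Q N y‖ ≤ ‖Dy - S N‖
    have hkey2 : ∀ N : ℕ, (N : ℝ) * ‖y - Q N y‖
        ≤ ‖Dy - ∑ n ∈ Finset.range (N + 1), (n : ℂ) • P n y‖ := by
      intro N
      have hineq : ∀ M : ℕ, N ≤ M → (N : ℝ) * ‖Q M y - Q N y‖
          ≤ ‖(∑ n ∈ Finset.range (M + 1), (n : ℂ) • P n y)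
              - ∑ n ∈ Finset.range (N + 1), (n : ℂ) • P n y‖ := by
        intro M h
        have e1 : ‖Q M y - Q N y‖ ^ 2 = ∑ n ∈ Finset.Ioc N M, ‖P n y‖ ^ 2 := by
          rw [hQdiff N M h]
          exact horth _ _ fun i _ j _ hne => hPorthog i j y y hne
        have ho : ∀ i ∈ Finset.Ioc N M, ∀ j ∈ Finset.Ioc N M, i ≠ j →
            ⟪(i : ℂ) • P i y, (j : ℂ) • P j y⟫ = (0 : ℂ) := by
          intro i _ j _ hne
          rw [inner_smul_left, inner_smul_right, hPorthog i j y y hne, mul_zero, mul_zero]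
        have e2 : ‖(∑ n ∈ Finset.range (M + 1), (n : ℂ) • P n y)
              - ∑ n ∈ Finset.range (N + 1), (n : ℂ) • P n y‖ ^ 2
            = ∑ n ∈ Finset.Ioc N M, (n : ℝ) ^ 2 * ‖P n y‖ ^ 2 := by
          rw [hSdiff N M h, horth _ _ ho]
          refine Finset.sum_congr rfl fun n _ => ?_
          rw [norm_smul, Complex.norm_natCast, mul_pow]
        have e3 : (N : ℝ) ^ 2 * ‖Q M y - Q N y‖ ^ 2
            ≤ ‖(∑ n ∈ Finset.range (M + 1), (n : ℂ) • P n y)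
              - ∑ n ∈ Finset.range (N + 1), (n : ℂ) • P n y‖ ^ 2 := by
          rw [e1, e2, Finset.mul_sum]
          refine Finset.sum_le_sum fun n hn => ?_
          have hn' : N < n := (Finset.mem_Ioc.mp hn).1
          have : (N : ℝ) ^ 2 ≤ (n : ℝ) ^ 2 := by
            have : (N : ℝ) ≤ (n : ℝ) := by exact_mod_cast hn'.le
            nlinarith [Nat.cast_nonneg (α := ℝ) N]
          nlinarith [sq_nonneg (‖P n y‖)]
        have h4 : (0:ℝ) ≤ (N : ℝ) * ‖Q M y - Q N y‖ := by positivity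
        nlinarith [norm_nonneg ((∑ n ∈ Finset.range (M + 1), (n : ℂ) • P n y)
          - ∑ n ∈ Finset.range (N + 1), (n : ℂ) • P n y), e3]
      have l1 : Filter.Tendsto (fun M => (N : ℝ) * ‖Q M y - Q N y‖) Filter.atTop
          (nhds ((N : ℝ) * ‖y - Q N y‖)) := by
        exact (((hQlim y).sub tendsto_const_nhds).norm).const_mul _
      have l2 : Filter.Tendsto
          (fun M => ‖(∑ n ∈ Finset.range (M + 1), (n : ℂ) • P n y)
            - ∑ n ∈ Finset.range (N + 1), (n : ℂ) • P n y‖) Filter.atTop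
          (nhds (‖Dy - ∑ n ∈ Finset.range (N + 1), (n : ℂ) • P n y‖)) :=
        (hS.sub tendsto_const_nhds).norm
      refine le_of_tendsto_of_tendsto l1 l2 ?_
      filter_upwards [Filter.eventually_ge_atTop N] with M hM
      exact hineq M hM
    -- remainder tends to zero
    have hrem : Filter.Tendsto (fun N : ℕ => (N : ℂ) • (y - Q N y)) Filter.atTop (nhds 0) := by
      refine squeeze_zero_norm
        (a := fun N : ℕ => ‖Dy - ∑ n ∈ Finset.range (N + 1), (n : ℂ) • P n y‖)
        (fun N => ?_) ?_
      · show ‖(N : ℂ) • (y - Q N y)‖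
            ≤ ‖Dy - ∑ n ∈ Finset.range (N + 1), (n : ℂ) • P n y‖
        rw [norm_smul, Complex.norm_natCast]
        exact hkey2 N
      · have : Filter.Tendsto
            (fun N : ℕ => Dy - ∑ n ∈ Finset.range (N + 1), (n : ℂ) • P n y)
            Filter.atTop (nhds (Dy - Dy)) :=
          tendsto_const_nhds.sub hS
        rw [sub_self] at this
        simpa using this.norm
    have hfinal := hS.add hrem
    rw [add_zero] at hfinal
    refine hfinal.congr fun N => ?_
    exact (hD'id N).symm
  have : Filter.Tendsto (fun N => C N x) Filter.atTop (nhds (Dax - π a Dx)) := by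
    have hfun : (fun N => C N x) = fun N =>
        (∑ k ∈ Finset.range N, (π a x - Q k (π a x))) -
          π a (∑ k ∈ Finset.range N, (x - Q k x)) := by
      funext N; exact hCid N x
    rw [hfun]
    exact (hclaimC (π a x) Dax h2).sub
      (((π a).continuous.tendsto Dx).comp (hclaimC x Dx h1))
  exact tendsto_nhds_unique (htend x) this
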